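/- Let G be a finite simple graph on n vertices with k connected components (k < n) and fix one vertex in each component. The number of functions f : V(G) → ℤ sending each fixed vertex to 0 and satisfying |f(x)-f(y)| ≤ h on every edge is, as a function of h, a polynomial in h of degree n - k with rational coefficients (for all integers h ≥ 0). -/

import Mathlib

set_option linter.unusedSectionVars false

open Finset

section LipAux

variable {V : Type*} [Fintype V] [DecidableEq V] (G : SimpleGraph V)
  (root : G.ConnectedComponent → V)

/-- The pattern of a Lipschitz function: `q` is the "quotient" part and `ρ` records the
relative order of the remainders. -/
def LipIsPattern (q : V → ℤ) (ρ : V → ℕ) : Prop :=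
  (∀ c, q (root c) = 0) ∧ (∀ c, ρ (root c) = 0) ∧
  (∀ x y, G.Adj x y → |q x - q y| ≤ 1) ∧
  (∀ x y, G.Adj x y → q x = q y + 1 → ρ x < ρ y) ∧
  (∀ v, |q v| ≤ (Fintype.card V : ℤ)) ∧
  (∀ v i, i ≤ ρ v → ∃ w, ρ w = i)

def LipPattern : Type _ := {p : (V → ℤ) × (V → ℕ) // LipIsPattern G root p.1 p.2}

noncomputable def jdeg (π : LipPattern G root) : ℕ := Finset.univ.sup π.1.2

lemma rho_lt_card {q : V → ℤ} {ρ : V → ℕ} (hp : LipIsPattern G root q ρ) (v : V) :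
    ρ v + 1 ≤ Fintype.card V := by
  classical
  obtain ⟨_, _, _, _, _, hseg⟩ := hp
  have : ∀ i ∈ Finset.range (ρ v + 1), ∃ w, ρ w = i := by
    intro i hi
    exact hseg v i (by simpa [Nat.lt_succ_iff] using Finset.mem_range.mp hi)
  choose g hg using this
  calc ρ v + 1 = (Finset.range (ρ v + 1)).card := by simp
    _ ≤ (Finset.univ : Finset V).card := by
        apply Finset.card_le_card_of_injOn (fun i => if hi : i ∈ Finset.range (ρ v + 1) then g i hi else v)
        · intro a _; exact Finset.mem_univ _
        · intro a ha b hb hab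
          simp only [Finset.mem_coe] at ha hb
          simp only [dif_pos ha, dif_pos hb] at hab
          have : ρ (g a ha) = ρ (g b hb) := by rw [hab]
          rwa [hg, hg] at this
    _ = Fintype.card V := by simp

noncomputable instance : Finite (LipPattern G root) := by
  classical
  set n := Fintype.card V with hn
  let F : LipPattern G root → (V → Set.Icc (-(n : ℤ)) (n : ℤ)) × (V → Fin (n + 1)) :=
    fun π =>
      ⟨fun v => ⟨π.1.1 v, by
          have := abs_le.mp (π.2.2.2.2.2.1 v)
          exact ⟨this.1, this.2⟩⟩,
       fun v => ⟨π.1.2 v, Nat.lt_succ_of_lt (Nat.lt_of_lt_of_le (Nat.lt_succ_self _)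
          (by simpa using rho_lt_card G root π.2 v))⟩⟩
  apply Finite.of_injective F
  intro π π' hpp
  apply Subtype.ext
  have hq := congrArg Prod.fst hpp
  have hr := congrArg Prod.snd hpp
  ext v
  · exact congrArg Subtype.val (congrFun hq v)
  · exact congrArg Fin.val (congrFun hr v)


/-! helper lemmas about `orderIsoOfFin` -/

lemma orderIso_coe_eq_of_eq {α : Type*} [LinearOrder α] {s s' : Finset α} (hss : s = s')
    {m m' : ℕ} (hm : s.card = m) (hm' : s'.card = m') {i : Fin m} {i' : Fin m'}
    (hii : (i : ℕ) = (i' : ℕ)) :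
    (s.orderIsoOfFin hm i : α) = (s'.orderIsoOfFin hm' i' : α) := by
  subst hss; subst hm; subst hm'
  have : i = i' := Fin.ext hii
  subst this; rfl

lemma orderIso_symm_coe_eq_of_eq {α : Type*} [LinearOrder α] {s s' : Finset α} (hss : s = s')
    {m m' : ℕ} (hm : s.card = m) (hm' : s'.card = m') {x x' : α} (hx : x ∈ s) (hx' : x' ∈ s')
    (hxx : x = x') :
    (((s.orderIsoOfFin hm).symm ⟨x, hx⟩ : Fin m) : ℕ)
      = (((s'.orderIsoOfFin hm').symm ⟨x', hx'⟩ : Fin m') : ℕ) := by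
  subst hss; subst hm; subst hm'; subst hxx
  rfl

lemma orderIso_zero_eq_zero {s : Finset ℤ} (h0 : (0 : ℤ) ∈ s) (hpos : ∀ x ∈ s, 0 ≤ x)
    {m : ℕ} (hm : s.card = m) (hz : 0 < m) :
    (s.orderIsoOfFin hm ⟨0, hz⟩ : ℤ) = 0 := by
  rw [Finset.coe_orderIsoOfFin_apply, Finset.orderEmbOfFin_zero hm hz]
  exact le_antisymm (Finset.min'_le _ _ h0) (hpos _ (s.min'_mem _))

lemma orderIso_symm_zero {s : Finset ℤ} (h0 : (0 : ℤ) ∈ s) (hpos : ∀ x ∈ s, 0 ≤ x)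
    {m : ℕ} (hm : s.card = m) :
    (((s.orderIsoOfFin hm).symm ⟨0, h0⟩ : Fin m) : ℕ) = 0 := by
  have hz : 0 < m := by
    rw [← hm]
    exact Finset.card_pos.mpr ⟨0, h0⟩
  have : s.orderIsoOfFin hm ⟨0, hz⟩ = ⟨0, h0⟩ := Subtype.ext (orderIso_zero_eq_zero h0 hpos hm hz)
  rw [← this, OrderIso.symm_apply_apply]

lemma orderIso_apply_eq_of_symm {α : Type*} [LinearOrder α] (s' s : Finset α) (hss : s' = s)
    {m : ℕ} (hm : s'.card = m) (i : Fin m) {x : α} (hx : x ∈ s)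
    (hi : (i : ℕ) = ((((s.orderIsoOfFin rfl).symm ⟨x, hx⟩) : Fin s.card) : ℕ)) :
    (s'.orderIsoOfFin hm i : α) = x := by
  subst hss
  subst hm
  have h1 : i = (s'.orderIsoOfFin rfl).symm ⟨x, hx⟩ := Fin.ext hi
  rw [h1, OrderIso.apply_symm_apply]

lemma orderIso_symm_eq_of_apply {α : Type*} [LinearOrder α] (s' s : Finset α) (hss : s' = s)
    {m : ℕ} (hm : s.card = m) (i : Fin m) {x : α} (hx' : x ∈ s')
    (hi : x = (s.orderIsoOfFin hm i : α)) :
    ((((s'.orderIsoOfFin rfl).symm ⟨x, hx'⟩) : Fin s'.card) : ℕ) = (i : ℕ) := by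
  subst hss
  subst hm
  have h1 : (⟨x, hx'⟩ : {y // y ∈ s'}) = s'.orderIsoOfFin rfl i := Subtype.ext hi
  rw [h1, OrderIso.symm_apply_apply]

section Decomp

variable (h : ℕ)

noncomputable def rmod (f : V → ℤ) (v : V) : ℤ := f v % ((h : ℤ) + 1)

noncomputable def qdiv (f : V → ℤ) (v : V) : ℤ := f v / ((h : ℤ) + 1)

noncomputable def Tset (f : V → ℤ) : Finset ℤ := Finset.image (rmod h f) Finset.univ

lemma hN_pos : (0 : ℤ) < (h : ℤ) + 1 := by positivity

lemma rmod_nonneg (f : V → ℤ) (v : V) : 0 ≤ rmod h f v :=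
  Int.emod_nonneg _ (by positivity)

lemma rmod_le (f : V → ℤ) (v : V) : rmod h f v ≤ (h : ℤ) := by
  have := Int.emod_lt_of_pos (f v) (hN_pos h)
  unfold rmod; omega

lemma rmod_mem_Tset (f : V → ℤ) (v : V) : rmod h f v ∈ Tset h f :=
  Finset.mem_image_of_mem _ (Finset.mem_univ v)

lemma qdiv_add_rmod (f : V → ℤ) (v : V) : ((h : ℤ) + 1) * qdiv h f v + rmod h f v = f v :=
  Int.mul_ediv_add_emod _ _

noncomputable def rho (f : V → ℤ) (v : V) : ℕ :=
  ((((Tset h f).orderIsoOfFin rfl).symm ⟨rmod h f v, rmod_mem_Tset h f v⟩ : Fin _) : ℕ)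

lemma rho_lt_iff (f : V → ℤ) (x y : V) :
    rho h f x < rho h f y ↔ rmod h f x < rmod h f y := by
  unfold rho
  rw [← Fin.lt_iff_val_lt_val, OrderIso.lt_iff_lt]
  exact Iff.rfl

lemma abs_sub_le_walk_length {q : V → ℤ} (hLip : ∀ x y, G.Adj x y → |q x - q y| ≤ 1) :
    ∀ {a b : V} (w : G.Walk a b), |q a - q b| ≤ (w.length : ℤ) := by
  intro a b w
  induction w with
  | nil => simp
  | @cons u x y hadj p ih =>
      calc |q u - q y| ≤ |q u - q x| + |q x - q y| := abs_sub_le _ _ _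
        _ ≤ 1 + (p.length : ℤ) := by gcongr; exact hLip _ _ hadj
        _ = ((p.cons hadj).length : ℤ) := by
            rw [SimpleGraph.Walk.length_cons]; push_cast; ring

lemma q_abs_le (hroot : ∀ c, G.connectedComponentMk (root c) = c)
    {q : V → ℤ} (hLip : ∀ x y, G.Adj x y → |q x - q y| ≤ 1)
    (hq0 : ∀ c, q (root c) = 0) (v : V) : |q v| ≤ (Fintype.card V : ℤ) := by
  have hreach : G.Reachable (root (G.connectedComponentMk v)) v :=
    SimpleGraph.ConnectedComponent.exact (by rw [hroot])
  obtain ⟨w⟩ := hreach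
  have hp := abs_sub_le_walk_length G hLip (w.toPath.1)
  have hlen : ((w.toPath.1 : G.Walk _ v).length : ℤ) ≤ (Fintype.card V : ℤ) := by
    have := SimpleGraph.Walk.IsPath.length_lt w.toPath.2
    exact_mod_cast this.le
  rw [hq0, zero_sub, abs_neg] at hp
  exact hp.trans hlen

section ValidF

variable (h : ℕ) {f : V → ℤ}

lemma rmod_root (hf0 : ∀ c, f (root c) = 0) (c : G.ConnectedComponent) :
    rmod h f (root c) = 0 := by
  unfold rmod; rw [hf0 c]; simp

lemma qdiv_root (hf0 : ∀ c, f (root c) = 0) (c : G.ConnectedComponent) :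
    qdiv h f (root c) = 0 := by
  unfold qdiv; rw [hf0 c]; simp

lemma Tset_nonneg : ∀ x ∈ Tset h f, (0 : ℤ) ≤ x := by
  intro x hx
  obtain ⟨v, _, rfl⟩ := Finset.mem_image.mp hx
  exact rmod_nonneg h f v

lemma qdiv_lip (hfL : ∀ x y, G.Adj x y → |f x - f y| ≤ (h : ℤ)) (x y : V) (hadj : G.Adj x y) :
    |qdiv h f x - qdiv h f y| ≤ 1 := by
  have hx := qdiv_add_rmod h f x
  have hy := qdiv_add_rmod h f y
  have hrx0 := rmod_nonneg h f x
  have hry0 := rmod_nonneg h f y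
  have hrxh := rmod_le h f x
  have hryh := rmod_le h f y
  have hfxy := abs_le.mp (hfL x y hadj)
  rw [abs_le]
  constructor
  · by_contra hcon
    push_neg at hcon
    have h2 : qdiv h f x - qdiv h f y ≤ -2 := by omega
    have : f x - f y ≤ ((h : ℤ) + 1) * (-2) + ((h : ℤ) - 0) := by nlinarith [hN_pos h]
    omega
  · by_contra hcon
    push_neg at hcon
    have h2 : 2 ≤ qdiv h f x - qdiv h f y := by omega
    have : ((h : ℤ) + 1) * 2 + (0 - (h : ℤ)) ≤ f x - f y := by nlinarith [hN_pos h]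
    omega

lemma qdiv_step (hfL : ∀ x y, G.Adj x y → |f x - f y| ≤ (h : ℤ)) (x y : V) (hadj : G.Adj x y)
    (hq : qdiv h f x = qdiv h f y + 1) : rho h f x < rho h f y := by
  rw [rho_lt_iff]
  have hx := qdiv_add_rmod h f x
  have hy := qdiv_add_rmod h f y
  have hfxy := abs_le.mp (hfL x y hadj)
  have : f x - f y = ((h : ℤ) + 1) + (rmod h f x - rmod h f y) := by
    rw [← hx, ← hy, hq]; ring
  omega

lemma zero_mem_Tset (hf0 : ∀ c, f (root c) = 0) (c : G.ConnectedComponent) :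
    (0 : ℤ) ∈ Tset h f := by
  rw [← rmod_root G root h hf0 c]
  exact rmod_mem_Tset h f (root c)

lemma isPattern_of_valid (hroot : ∀ c, G.connectedComponentMk (root c) = c)
    (hf0 : ∀ c, f (root c) = 0) (hfL : ∀ x y, G.Adj x y → |f x - f y| ≤ (h : ℤ)) :
    LipIsPattern G root (qdiv h f) (rho h f) := by
  refine ⟨qdiv_root G root h hf0, ?_, qdiv_lip G h hfL, qdiv_step G h hfL, ?_, ?_⟩
  · intro c
    unfold rho
    refine (orderIso_symm_coe_eq_of_eq rfl rfl rfl _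
      (zero_mem_Tset G root h hf0 c) (rmod_root G root h hf0 c)).trans ?_
    exact orderIso_symm_zero (zero_mem_Tset G root h hf0 c) (Tset_nonneg h) rfl
  · exact fun v => q_abs_le G root hroot (qdiv_lip G h hfL) (qdiv_root G root h hf0) v
  · intro v i hi
    have hcard : i < (Tset h f).card := by
      have : rho h f v < (Tset h f).card := Fin.is_lt _
      omega
    obtain ⟨w, _, hw⟩ := Finset.mem_image.mp
      (((Tset h f).orderIsoOfFin rfl ⟨i, hcard⟩).2)
    refine ⟨w, ?_⟩
    unfold rho
    have h1 : (((Tset h f).orderIsoOfFin rfl).symm ⟨rmod h f w, rmod_mem_Tset h f w⟩)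
        = ⟨i, hcard⟩ := by
      have h2 : (⟨rmod h f w, rmod_mem_Tset h f w⟩ : {x // x ∈ Tset h f})
          = (Tset h f).orderIsoOfFin rfl ⟨i, hcard⟩ := Subtype.ext hw
      rw [h2, OrderIso.symm_apply_apply]
    exact congrArg Fin.val h1

noncomputable def Sset (f : V → ℤ) : Finset ℕ := ((Tset h f).erase 0).image Int.toNat

lemma Sset_subset (f : V → ℤ) : Sset h f ⊆ Finset.Icc 1 h := by
  intro x hx
  obtain ⟨t, ht, rfl⟩ := Finset.mem_image.mp hx
  obtain ⟨ht0, htT⟩ := Finset.mem_erase.mp ht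
  have h1 := Tset_nonneg h _ htT
  obtain ⟨v, _, rfl⟩ := Finset.mem_image.mp htT
  have h2 := rmod_le h f v
  rw [Finset.mem_Icc]
  omega

lemma sup_rho_add_one [Nonempty V] (f : V → ℤ) :
    Finset.univ.sup (rho h f) + 1 = (Tset h f).card := by
  have hTne : (Tset h f).Nonempty := ⟨rmod h f (Classical.arbitrary V),
    rmod_mem_Tset h f (Classical.arbitrary V)⟩
  have hlt : Finset.univ.sup (rho h f) < (Tset h f).card := by
    rw [Finset.sup_lt_iff (by simpa [Finset.card_pos] using hTne)]
    intro v _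
    exact Fin.is_lt _
  have hge : (Tset h f).card - 1 ≤ Finset.univ.sup (rho h f) := by
    have hc : (Tset h f).card - 1 < (Tset h f).card := by
      have := Finset.card_pos.mpr hTne; omega
    obtain ⟨w, _, hw⟩ := Finset.mem_image.mp
      (((Tset h f).orderIsoOfFin rfl ⟨(Tset h f).card - 1, hc⟩).2)
    have h1 : rho h f w = (Tset h f).card - 1 := by
      unfold rho
      have h2 : (⟨rmod h f w, rmod_mem_Tset h f w⟩ : {x // x ∈ Tset h f})
          = (Tset h f).orderIsoOfFin rfl ⟨(Tset h f).card - 1, hc⟩ := Subtype.ext hw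
      rw [h2, OrderIso.symm_apply_apply]
    calc (Tset h f).card - 1 = rho h f w := h1.symm
      _ ≤ _ := Finset.le_sup (Finset.mem_univ w)
  omega

lemma Sset_card [Nonempty V] {f : V → ℤ} (hf0 : ∀ c, f (root c) = 0) :
    (Sset h f).card = Finset.univ.sup (rho h f) := by
  have h0T : (0 : ℤ) ∈ Tset h f :=
    zero_mem_Tset G root h hf0 (G.connectedComponentMk (Classical.arbitrary V))
  have hinj : Set.InjOn Int.toNat ((Tset h f).erase 0 : Finset ℤ) := by
    intro a ha b hb hab
    have ha' := Tset_nonneg h _ (Finset.mem_of_mem_erase ha)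
    have hb' := Tset_nonneg h _ (Finset.mem_of_mem_erase hb)
    omega
  rw [Sset, Finset.card_image_of_injOn hinj, Finset.card_erase_of_mem h0T,
    ← sup_rho_add_one h f]
  omega

end ValidF

section Backward

variable (h : ℕ)

noncomputable def Tins (S : Finset ℕ) : Finset ℤ := insert (0 : ℤ) (S.image (Nat.cast))

lemma Tins_nonneg (S : Finset ℕ) : ∀ x ∈ Tins S, (0 : ℤ) ≤ x := by
  intro x hx
  rcases Finset.mem_insert.mp hx with rfl | hx
  · exact le_refl 0
  · obtain ⟨n, _, rfl⟩ := Finset.mem_image.mp hx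
    positivity

lemma Tins_le {S : Finset ℕ} (hS : S ⊆ Finset.Icc 1 h) : ∀ x ∈ Tins S, x ≤ (h : ℤ) := by
  intro x hx
  rcases Finset.mem_insert.mp hx with rfl | hx
  · positivity
  · obtain ⟨n, hn, rfl⟩ := Finset.mem_image.mp hx
    exact_mod_cast (Finset.mem_Icc.mp (hS hn)).2

lemma Tins_card {S : Finset ℕ} (hS : S ⊆ Finset.Icc 1 h) : (Tins S).card = S.card + 1 := by
  rw [Tins, Finset.card_insert_of_notMem, Finset.card_image_of_injective _ Nat.cast_injective]
  intro hmem
  obtain ⟨n, hn, hn0⟩ := Finset.mem_image.mp hmem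
  have := (Finset.mem_Icc.mp (hS hn)).1
  omega

variable (π : LipPattern G root) {S : Finset ℕ}

lemma rho_le_jdeg (v : V) : π.1.2 v ≤ jdeg G root π := Finset.le_sup (Finset.mem_univ v)

noncomputable def rfun (hS : S ⊆ Finset.Icc 1 h ∧ S.card = jdeg G root π) (v : V) : ℤ :=
  ((Tins S).orderIsoOfFin (by rw [Tins_card h hS.1, hS.2]) ⟨π.1.2 v,
    Nat.lt_succ_of_le (rho_le_jdeg G root π v)⟩ : ℤ)

noncomputable def ffun (hS : S ⊆ Finset.Icc 1 h ∧ S.card = jdeg G root π) (v : V) : ℤ :=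
  ((h : ℤ) + 1) * π.1.1 v + rfun G root h π hS v

lemma rfun_mem (hS : S ⊆ Finset.Icc 1 h ∧ S.card = jdeg G root π) (v : V) :
    rfun G root h π hS v ∈ Tins S :=
  ((Tins S).orderIsoOfFin _ _).2

lemma rfun_nonneg (hS : S ⊆ Finset.Icc 1 h ∧ S.card = jdeg G root π) (v : V) :
    0 ≤ rfun G root h π hS v :=
  Tins_nonneg S _ (rfun_mem G root h π hS v)

lemma rfun_le (hS : S ⊆ Finset.Icc 1 h ∧ S.card = jdeg G root π) (v : V) :
    rfun G root h π hS v ≤ (h : ℤ) :=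
  Tins_le h hS.1 _ (rfun_mem G root h π hS v)

lemma rfun_lt_iff (hS : S ⊆ Finset.Icc 1 h ∧ S.card = jdeg G root π) (x y : V) :
    rfun G root h π hS x < rfun G root h π hS y ↔ π.1.2 x < π.1.2 y := by
  unfold rfun
  rw [Subtype.coe_lt_coe, OrderIso.lt_iff_lt, Fin.mk_lt_mk]

lemma ffun_root (hS : S ⊆ Finset.Icc 1 h ∧ S.card = jdeg G root π)
    (c : G.ConnectedComponent) : ffun G root h π hS (root c) = 0 := by
  unfold ffun
  rw [π.2.1 c, mul_zero, zero_add]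
  unfold rfun
  have h0 : (0 : ℤ) ∈ Tins S := Finset.mem_insert_self _ _
  have hthis := orderIso_zero_eq_zero h0 (Tins_nonneg S)
    (show (Tins S).card = jdeg G root π + 1 by rw [Tins_card h hS.1, hS.2])
    (Nat.succ_pos _)
  exact (orderIso_coe_eq_of_eq rfl _ _ (π.2.2.1 c)).trans hthis

lemma ffun_lip (hS : S ⊆ Finset.Icc 1 h ∧ S.card = jdeg G root π) (x y : V)
    (hadj : G.Adj x y) : |ffun G root h π hS x - ffun G root h π hS y| ≤ (h : ℤ) := by
  have hq := abs_le.mp (π.2.2.2.1 x y hadj)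
  have hrx0 := rfun_nonneg G root h π hS x
  have hry0 := rfun_nonneg G root h π hS y
  have hrxh := rfun_le G root h π hS x
  have hryh := rfun_le G root h π hS y
  unfold ffun
  rcases lt_trichotomy (π.1.1 x) (π.1.1 y) with hlt | heq | hgt
  · have hq1 : π.1.1 y = π.1.1 x + 1 := by omega
    have hrr : rfun G root h π hS y < rfun G root h π hS x := by
      rw [rfun_lt_iff]
      exact π.2.2.2.2.1 y x hadj.symm hq1
    rw [abs_le]
    constructor <;> nlinarith [hN_pos h]
  · rw [heq, abs_le]
    constructor <;> nlinarith
  · have hq1 : π.1.1 x = π.1.1 y + 1 := by omega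
    have hrr : rfun G root h π hS x < rfun G root h π hS y := by
      rw [rfun_lt_iff]
      exact π.2.2.2.2.1 x y hadj hq1
    rw [abs_le]
    constructor <;> nlinarith [hN_pos h]

lemma Tins_Sset [Nonempty V] {f : V → ℤ} (hf0 : ∀ c, f (root c) = 0) :
    Tins (Sset h f) = Tset h f := by
  have h0T : (0 : ℤ) ∈ Tset h f :=
    zero_mem_Tset G root h hf0 (G.connectedComponentMk (Classical.arbitrary V))
  unfold Tins Sset
  rw [Finset.image_image]
  have himg : ((Tset h f).erase 0).image (Nat.cast ∘ Int.toNat) = (Tset h f).erase 0 := by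
    rw [show ((Tset h f).erase 0).image (Nat.cast ∘ Int.toNat)
        = ((Tset h f).erase 0).image id from Finset.image_congr (by
          intro t ht
          have := Tset_nonneg h _ (Finset.mem_of_mem_erase ht)
          simp [Int.toNat_of_nonneg this]), Finset.image_id]
  rw [himg, Finset.insert_erase h0T]

lemma roundtripA [Nonempty V] {f : V → ℤ} (hroot : ∀ c, G.connectedComponentMk (root c) = c)
    (hf0 : ∀ c, f (root c) = 0) (hfL : ∀ x y, G.Adj x y → |f x - f y| ≤ (h : ℤ)) (v : V) :
    ffun G root h ⟨(qdiv h f, rho h f), isPattern_of_valid G root h hroot hf0 hfL⟩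
      ⟨Sset_subset h f, Sset_card G root h hf0⟩ v = f v := by
  unfold ffun
  have hr : rfun G root h ⟨(qdiv h f, rho h f), isPattern_of_valid G root h hroot hf0 hfL⟩
      ⟨Sset_subset h f, Sset_card G root h hf0⟩ v = rmod h f v := by
    unfold rfun
    exact orderIso_apply_eq_of_symm _ _ (Tins_Sset G root h hf0) _ _
      (rmod_mem_Tset h f v) rfl
  rw [hr]
  exact qdiv_add_rmod h f v

section RoundB

variable (π : LipPattern G root) {S : Finset ℕ}
  (hS : S ⊆ Finset.Icc 1 h ∧ S.card = jdeg G root π)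

lemma rmod_ffun (v : V) : rmod h (ffun G root h π hS) v = rfun G root h π hS v := by
  unfold rmod ffun
  rw [add_comm, Int.add_mul_emod_self_left]
  exact Int.emod_eq_of_lt (rfun_nonneg G root h π hS v)
    (by have := rfun_le G root h π hS v; omega)

lemma qdiv_ffun (v : V) : qdiv h (ffun G root h π hS) v = π.1.1 v := by
  unfold qdiv ffun
  rw [add_comm, Int.add_mul_ediv_left _ _ (by positivity : ((h : ℤ) + 1) ≠ 0),
    Int.ediv_eq_zero_of_lt (rfun_nonneg G root h π hS v)
      (by have := rfun_le G root h π hS v; omega), zero_add]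

lemma Tins_card' (hS : S ⊆ Finset.Icc 1 h ∧ S.card = jdeg G root π) :
    (Tins S).card = jdeg G root π + 1 := by
  rw [Tins_card h hS.1, hS.2]

lemma Tset_ffun [Nonempty V] : Tset h (ffun G root h π hS) = Tins S := by
  apply Finset.Subset.antisymm
  · intro t ht
    obtain ⟨v, _, rfl⟩ := Finset.mem_image.mp ht
    rw [rmod_ffun G root h π hS v]
    exact rfun_mem G root h π hS v
  · intro t ht
    have hcard : (Tins S).card = jdeg G root π + 1 := Tins_card' G root h π hS
    set i := ((Tins S).orderIsoOfFin hcard).symm ⟨t, ht⟩ with hidef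
    obtain ⟨v₀, _, hv₀⟩ := Finset.exists_mem_eq_sup Finset.univ Finset.univ_nonempty π.1.2
    have hile : (i : ℕ) ≤ π.1.2 v₀ := by
      rw [← hv₀]
      exact Nat.lt_succ_iff.mp i.2
    obtain ⟨w, hw⟩ := π.2.2.2.2.2.2 v₀ i hile
    have hrw : rmod h (ffun G root h π hS) w = t := by
      rw [rmod_ffun G root h π hS w]
      unfold rfun
      refine orderIso_apply_eq_of_symm _ _ rfl _ _ ht ?_
      show π.1.2 w = ((((Tins S).orderIsoOfFin rfl).symm ⟨t, ht⟩ : Fin (Tins S).card) : ℕ)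
      rw [hw]
      exact orderIso_symm_coe_eq_of_eq rfl hcard rfl ht ht rfl
    rw [← hrw]
    exact rmod_mem_Tset h _ w

lemma rho_ffun [Nonempty V] (v : V) : rho h (ffun G root h π hS) v = π.1.2 v := by
  unfold rho
  exact orderIso_symm_eq_of_apply _ _ (Tset_ffun G root h π hS) (Tins_card' G root h π hS)
    ⟨π.1.2 v, Nat.lt_succ_of_le (rho_le_jdeg G root π v)⟩ (rmod_mem_Tset h _ v)
    (rmod_ffun G root h π hS v)

lemma Sset_ffun [Nonempty V] : Sset h (ffun G root h π hS) = S := by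
  unfold Sset
  rw [Tset_ffun G root h π hS]
  unfold Tins
  rw [Finset.erase_insert (by
    intro hmem
    obtain ⟨n, hn, hn0⟩ := Finset.mem_image.mp hmem
    have := (Finset.mem_Icc.mp (hS.1 hn)).1
    omega), Finset.image_image]
  rw [show S.image (Int.toNat ∘ Nat.cast) = S.image id from Finset.image_congr (by
    intro n _; simp), Finset.image_id]

end RoundB

end Backward

end Decomp

noncomputable instance : Fintype (LipPattern G root) := Fintype.ofFinite _

noncomputable instance : Fintype G.ConnectedComponent := Fintype.ofFinite _

noncomputable def lipEquiv [Nonempty V] (hroot : ∀ c, G.connectedComponentMk (root c) = c)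
    (h : ℕ) :
    {f : V → ℤ // (∀ c, f (root c) = 0) ∧ ∀ x y, G.Adj x y → |f x - f y| ≤ (h : ℤ)} ≃
      Σ π : LipPattern G root,
        {S : Finset ℕ // S ⊆ Finset.Icc 1 h ∧ S.card = jdeg G root π} where
  toFun f := ⟨⟨(qdiv h f.1, rho h f.1), isPattern_of_valid G root h hroot f.2.1 f.2.2⟩,
    ⟨Sset h f.1, Sset_subset h f.1, Sset_card G root h f.2.1⟩⟩
  invFun p := ⟨ffun G root h p.1 p.2.2,
    ffun_root G root h p.1 p.2.2, ffun_lip G root h p.1 p.2.2⟩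
  left_inv := by
    rintro ⟨f, hf0, hfL⟩
    apply Subtype.ext
    funext v
    exact roundtripA G root h hroot hf0 hfL v
  right_inv := by
    rintro ⟨π, S, hS⟩
    refine Sigma.subtype_ext ?_ ?_
    · apply Subtype.ext
      refine Prod.ext ?_ ?_ <;> funext v
      · exact qdiv_ffun G root h π hS v
      · exact rho_ffun G root h π hS v
    · exact Sset_ffun G root h π hS

lemma card_valid [Nonempty V] (hroot : ∀ c, G.connectedComponentMk (root c) = c) (h : ℕ) :
    Nat.card {f : V → ℤ // (∀ c, f (root c) = 0) ∧ ∀ x y, G.Adj x y → |f x - f y| ≤ (h : ℤ)}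
      = ∑ π : LipPattern G root, Nat.choose h (jdeg G root π) := by
  classical
  rw [Nat.card_congr ((lipEquiv G root hroot h).trans
    (Equiv.sigmaCongrRight (fun π =>
      (Equiv.subtypeEquivRight (fun S => (Finset.mem_powersetCard).symm) :
        {S : Finset ℕ // S ⊆ Finset.Icc 1 h ∧ S.card = jdeg G root π} ≃
          {S : Finset ℕ // S ∈ Finset.powersetCard (jdeg G root π) (Finset.Icc 1 h)}))))]
  rw [Nat.card_eq_fintype_card, Fintype.card_sigma]
  congr 1
  funext π
  rw [Fintype.card_coe, Finset.card_powersetCard, Nat.card_Icc]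
  norm_num

lemma root_injective (hroot : ∀ c, G.connectedComponentMk (root c) = c) :
    Function.Injective root := by
  intro c c' hcc
  rw [← hroot c, ← hroot c', hcc]

lemma jdeg_le [Nonempty V] (hroot : ∀ c, G.connectedComponentMk (root c) = c)
    (π : LipPattern G root) :
    jdeg G root π ≤ Fintype.card V - Nat.card G.ConnectedComponent := by
  classical
  set R : Finset V := Finset.image root Finset.univ with hR
  have hRcard : R.card = Nat.card G.ConnectedComponent := by
    rw [hR, Finset.card_image_of_injective _ (root_injective G root hroot),
      Finset.card_univ, Nat.card_eq_fintype_card]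
  obtain ⟨v₀, _, hv₀⟩ := Finset.exists_mem_eq_sup Finset.univ Finset.univ_nonempty π.1.2
  have hseg : ∀ i ∈ Finset.Icc 1 (jdeg G root π), ∃ w, π.1.2 w = i := by
    intro i hi
    exact π.2.2.2.2.2.2 v₀ i (by rw [← hv₀]; exact (Finset.mem_Icc.mp hi).2)
  choose g hg using hseg
  have hcard : (Finset.Icc 1 (jdeg G root π)).card ≤ (Finset.univ \ R).card := by
    apply Finset.card_le_card_of_injOn
      (fun i => if hi : i ∈ Finset.Icc 1 (jdeg G root π) then g i hi else Classical.arbitrary V)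
    · intro i hi
      rw [Finset.mem_coe] at hi ⊢; rw [Finset.mem_sdiff]
      refine ⟨Finset.mem_univ _, ?_⟩
      simp only [dif_pos hi]
      intro hmem
      obtain ⟨c, _, hc⟩ := Finset.mem_image.mp hmem
      have h1 := hg i hi
      rw [← hc, π.2.2.1 c] at h1
      have := (Finset.mem_Icc.mp hi).1
      omega
    · intro a ha b hb hab
      simp only [Finset.mem_coe] at ha hb
      simp only [dif_pos ha, dif_pos hb] at hab
      have : π.1.2 (g a ha) = π.1.2 (g b hb) := by rw [hab]
      rwa [hg, hg] at this
  rw [Nat.card_Icc, Finset.card_sdiff_of_subset (Finset.subset_univ R), Finset.card_univ, hRcard] at hcard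
  omega

lemma exists_jdeg_eq (hroot : ∀ c, G.connectedComponentMk (root c) = c)
    (hk : Nat.card G.ConnectedComponent < Fintype.card V) :
    ∃ π : LipPattern G root,
      jdeg G root π = Fintype.card V - Nat.card G.ConnectedComponent := by
  classical
  have : 0 < Fintype.card V := by omega
  haveI : Nonempty V := Fintype.card_pos_iff.mp this
  set R : Finset V := Finset.image root Finset.univ with hR
  have hRcard : R.card = Nat.card G.ConnectedComponent := by
    rw [hR, Finset.card_image_of_injective _ (root_injective G root hroot),
      Finset.card_univ, Nat.card_eq_fintype_card]
  set Rc : Finset V := Finset.univ \ R with hRc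
  set d : ℕ := Fintype.card V - Nat.card G.ConnectedComponent with hd
  have hRcc : Rc.card = d := by
    rw [hRc, Finset.card_sdiff_of_subset (Finset.subset_univ R), Finset.card_univ, hRcard]
  have hd1 : 1 ≤ d := by omega
  set e : {x // x ∈ Rc} ≃ Fin Rc.card := Rc.equivFin with he
  set ρ : V → ℕ := fun v => if hv : v ∈ Rc then ((e ⟨v, hv⟩ : Fin Rc.card) : ℕ) + 1 else 0
    with hρ
  have hroot_mem : ∀ c, root c ∈ R := fun c => Finset.mem_image_of_mem _ (Finset.mem_univ c)
  have hρroot : ∀ c, ρ (root c) = 0 := by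
    intro c
    rw [hρ]
    simp only
    rw [dif_neg (by rw [hRc]; simp [hroot_mem c])]
  have hρval : ∀ (x : {x // x ∈ Rc}), ρ x.1 = ((e x : Fin Rc.card) : ℕ) + 1 := by
    intro x
    rw [hρ]
    simp only
    rw [dif_pos x.2]
  have hpat : LipIsPattern G root (fun _ => 0) ρ := by
    refine ⟨fun _ => rfl, hρroot, by simp, by simp, by simp [Fintype.card_pos], ?_⟩
    · intro v i hi
      rcases Nat.eq_zero_or_pos i with rfl | hipos
      · exact ⟨root (G.connectedComponentMk (Classical.arbitrary V)), hρroot _⟩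
      · have hvRc : v ∈ Rc := by
          by_contra hv
          rw [hρ] at hi
          simp only [dif_neg hv] at hi
          omega
        have hiv := hρval ⟨v, hvRc⟩
        simp only at hiv
        rw [hρ] at hi
        simp only [dif_pos hvRc] at hi
        have hilt : i - 1 < Rc.card := by
          have := (e ⟨v, hvRc⟩).2
          omega
        refine ⟨(e.symm ⟨i - 1, hilt⟩).1, ?_⟩
        rw [hρval (e.symm ⟨i - 1, hilt⟩), Equiv.apply_symm_apply]
        show i - 1 + 1 = i
        omega
  refine ⟨⟨((fun _ => 0), ρ), hpat⟩, ?_⟩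
  have hle := jdeg_le G root hroot ⟨((fun _ => 0), ρ), hpat⟩
  have hge : d ≤ jdeg G root ⟨((fun _ => 0), ρ), hpat⟩ := by
    have hdlt : d - 1 < Rc.card := by omega
    have hv₁ := hρval (e.symm ⟨d - 1, hdlt⟩)
    rw [Equiv.apply_symm_apply] at hv₁
    have : ρ (e.symm ⟨d - 1, hdlt⟩).1 = d := by rw [hv₁]; show d - 1 + 1 = d; omega
    calc d = ρ (e.symm ⟨d - 1, hdlt⟩).1 := this.symm
      _ ≤ _ := Finset.le_sup (Finset.mem_univ _)
  omega

end LipAux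

theorem lipschitz_count_polynomial {V : Type*} [Fintype V] [DecidableEq V]
    (G : SimpleGraph V) (root : G.ConnectedComponent → V)
    (hroot : ∀ c, G.connectedComponentMk (root c) = c)
    (hk : Nat.card G.ConnectedComponent < Fintype.card V) :
    ∃ P : Polynomial ℚ,
      P.natDegree = Fintype.card V - Nat.card G.ConnectedComponent ∧
      ∀ h : ℕ,
        (Nat.card {f : V → ℤ // (∀ c, f (root c) = 0) ∧
            ∀ x y, G.Adj x y → |f x - f y| ≤ (h : ℤ)} : ℚ) = P.eval (h : ℚ) := by
  classical
  haveI : Nonempty V := Fintype.card_pos_iff.mp (by omega)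
  set d : ℕ := Fintype.card V - Nat.card G.ConnectedComponent with hd
  set P : Polynomial ℚ := ∑ π : LipPattern G root,
    Polynomial.C (((jdeg G root π).factorial : ℚ)⁻¹) * descPochhammer ℚ (jdeg G root π)
    with hP
  have heval : ∀ h : ℕ, P.eval (h : ℚ)
      = ∑ π : LipPattern G root, (Nat.choose h (jdeg G root π) : ℚ) := by
    intro h
    rw [hP, Polynomial.eval_finset_sum]
    apply Finset.sum_congr rfl
    intro π _
    rw [Polynomial.eval_mul, Polynomial.eval_C, descPochhammer_eval_eq_descFactorial,
      Nat.descFactorial_eq_factorial_mul_choose]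
    push_cast
    rw [← mul_assoc, inv_mul_cancel₀ (by positivity), one_mul]
  have hdegle : P.natDegree ≤ d := by
    apply Polynomial.natDegree_sum_le_of_forall_le
    intro π _
    refine le_trans (Polynomial.natDegree_C_mul_le _ _) ?_
    rw [descPochhammer_natDegree]
    exact jdeg_le G root hroot π
  have hcoeff : P.coeff d ≠ 0 := by
    rw [hP, Polynomial.finset_sum_coeff]
    have hterm : ∀ π : LipPattern G root,
        (Polynomial.C (((jdeg G root π).factorial : ℚ)⁻¹)
          * descPochhammer ℚ (jdeg G root π)).coeff d
        = if jdeg G root π = d then ((d.factorial : ℚ))⁻¹ else 0 := by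
      intro π
      rw [Polynomial.coeff_C_mul]
      by_cases hj : jdeg G root π = d
      · rw [if_pos hj, hj]
        rw [show (descPochhammer ℚ d).coeff d = 1 from by
          have hm := (monic_descPochhammer ℚ d).coeff_natDegree
          rwa [descPochhammer_natDegree] at hm]
        ring
      · rw [if_neg hj]
        rw [Polynomial.coeff_eq_zero_of_natDegree_lt, mul_zero]
        rw [descPochhammer_natDegree]
        exact lt_of_le_of_ne (jdeg_le G root hroot π) hj
    rw [Finset.sum_congr rfl (fun π _ => hterm π), ← Finset.sum_filter, Finset.sum_const]
    obtain ⟨π₀, hπ₀⟩ := exists_jdeg_eq G root hroot hk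
    have hmem : π₀ ∈ Finset.univ.filter (fun π => jdeg G root π = d) := by
      rw [Finset.mem_filter]
      exact ⟨Finset.mem_univ _, hπ₀⟩
    have hpos : 0 < (Finset.univ.filter (fun π => jdeg G root π = d)).card :=
      Finset.card_pos.mpr ⟨π₀, hmem⟩
    have : (0 : ℚ) < (Finset.univ.filter (fun π => jdeg G root π = d)).card
        • ((d.factorial : ℚ))⁻¹ := by
      rw [nsmul_eq_mul]
      positivity
    exact ne_of_gt this
  refine ⟨P, le_antisymm hdegle (Polynomial.le_natDegree_of_ne_zero hcoeff), ?_⟩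
  intro h
  rw [card_valid G root hroot h, heval h]
  push_cast
  rfl
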